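/- arXiv:2508.10331 — 3 statements merged into one kernel-verified Lean document; each statement's English description precedes it below -/
import Mathlib

section
/- Let σ, σ0, τ0 > 0, z ≥ 0, and N a positive integer. Define R(β) = ∫_{-∞}^{∞} (1/(√(2π) σ0)) exp(−(τ − τ0)²/(2σ0²)) · Φ((Nτ + τ0 β)/(2√N σ) − z) · τ dτ, where Φ is the standard normal CDF. Then the derivative of R with respect to β equals exp(−(Nτ0 + βτ0 − 2√N z σ)²/(2N(Nσ0² + 4σ²))) · τ0 · (−β τ0 σ0² + 2σ(√N z σ0² + 2τ0 σ)) / (√N · √(2π) · σ0 · √(4/σ0² + N/σ²) · σ · (Nσ0² + 4σ²)). -/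
open Real MeasureTheory

/-- Standard normal CDF. -/
noncomputable def Phi (x : ℝ) : ℝ :=
  ∫ t in Set.Iic x, (Real.sqrt (2 * Real.pi))⁻¹ * Real.exp (-t ^ 2 / 2)

lemma stdGauss_eq : (fun t : ℝ => (Real.sqrt (2 * Real.pi))⁻¹ * Real.exp (-t ^ 2 / 2))
    = fun t : ℝ => (Real.sqrt (2 * Real.pi))⁻¹ * Real.exp (-(1/2 : ℝ) * t ^ 2) := by
  funext t; congr 1; ring_nf

lemma stdGauss_integrable :
    Integrable (fun t : ℝ => (Real.sqrt (2 * Real.pi))⁻¹ * Real.exp (-t ^ 2 / 2)) := by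
  rw [stdGauss_eq]
  exact (integrable_exp_neg_mul_sq (by norm_num : (0:ℝ) < 1/2)).const_mul _

lemma stdGauss_continuous :
    Continuous (fun t : ℝ => (Real.sqrt (2 * Real.pi))⁻¹ * Real.exp (-t ^ 2 / 2)) := by
  continuity

lemma Phi_hasDerivAt (x : ℝ) :
    HasDerivAt Phi ((Real.sqrt (2 * Real.pi))⁻¹ * Real.exp (-x ^ 2 / 2)) x := by
  set g : ℝ → ℝ := fun t => (Real.sqrt (2 * Real.pi))⁻¹ * Real.exp (-t ^ 2 / 2) with hg
  have hint := stdGauss_integrable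
  have key : ∀ u : ℝ, Phi u = Phi 0 + ∫ t in (0:ℝ)..u, g t := by
    intro u
    have := intervalIntegral.integral_Iic_sub_Iic (hint.integrableOn (s := Set.Iic (0:ℝ)))
      (hint.integrableOn (s := Set.Iic u))
    simp only [Phi]
    linarith [this]
  have h : HasDerivAt (fun u => Phi 0 + ∫ t in (0:ℝ)..u, g t) (g x) x := by
    have := intervalIntegral.integral_hasDerivAt_right
      (stdGauss_continuous.intervalIntegrable 0 x)
      (stdGauss_continuous.stronglyMeasurableAtFilter volume (nhds x))
      stdGauss_continuous.continuousAt
    exact this.const_add (Phi 0)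
  exact h.congr_of_eventuallyEq (Filter.Eventually.of_forall fun u => (key u))

lemma Phi_continuous : Continuous Phi :=
  continuous_iff_continuousAt.2 fun x => (Phi_hasDerivAt x).differentiableAt.continuousAt

lemma Phi_nonneg (x : ℝ) : 0 ≤ Phi x := by
  apply MeasureTheory.setIntegral_nonneg measurableSet_Iic
  intro t _; positivity

lemma Phi_le_one (x : ℝ) : Phi x ≤ 1 := by
  have h1 : Phi x ≤ ∫ t : ℝ, (Real.sqrt (2 * Real.pi))⁻¹ * Real.exp (-t ^ 2 / 2) :=
    MeasureTheory.setIntegral_le_integral stdGauss_integrable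
      (Filter.Eventually.of_forall fun t => by positivity)
  have h2 : (∫ t : ℝ, (Real.sqrt (2 * Real.pi))⁻¹ * Real.exp (-t ^ 2 / 2)) = 1 := by
    rw [stdGauss_eq, MeasureTheory.integral_const_mul, integral_gaussian]
    have : Real.pi / (1/2 : ℝ) = 2 * Real.pi := by ring
    rw [this, inv_mul_cancel₀ (Real.sqrt_ne_zero'.2 (by positivity))]
  linarith

lemma integral_lin_gauss (A m : ℝ) (hA : 0 < A) :
    (∫ τ : ℝ, τ * Real.exp (-(A/2) * (τ - m) ^ 2)) = m * Real.sqrt (2 * Real.pi / A) := by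
  have hA2 : 0 < A / 2 := by linarith
  have hshift : (fun τ : ℝ => τ * Real.exp (-(A/2) * (τ - m) ^ 2))
      = fun τ : ℝ => (fun y : ℝ => (y + m) * Real.exp (-(A/2) * y ^ 2)) (τ - m) := by
    funext τ; simp [sub_add_cancel]
  rw [hshift, MeasureTheory.integral_sub_right_eq_self
    (fun y : ℝ => (y + m) * Real.exp (-(A/2) * y ^ 2)) m]
  have hsplit : (fun y : ℝ => (y + m) * Real.exp (-(A/2) * y ^ 2))
      = fun y : ℝ => y * Real.exp (-(A/2) * y ^ 2) + m * Real.exp (-(A/2) * y ^ 2) := by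
    funext y; ring
  have I1 : Integrable (fun y : ℝ => y * Real.exp (-(A/2) * y ^ 2)) :=
    integrable_mul_exp_neg_mul_sq hA2
  have I2 : Integrable (fun y : ℝ => m * Real.exp (-(A/2) * y ^ 2)) :=
    (integrable_exp_neg_mul_sq hA2).const_mul m
  rw [hsplit, MeasureTheory.integral_add I1 I2]
  have hodd : (∫ y : ℝ, y * Real.exp (-(A/2) * y ^ 2)) = 0 := by
    have h1 : (∫ y : ℝ, y * Real.exp (-(A/2) * y ^ 2))
        = ∫ y : ℝ, (fun t : ℝ => t * Real.exp (-(A/2) * t ^ 2)) (-y) :=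
      (MeasureTheory.integral_neg_eq_self _ _).symm
    have h2 : (fun y : ℝ => (fun t : ℝ => t * Real.exp (-(A/2) * t ^ 2)) (-y))
        = fun y : ℝ => -(y * Real.exp (-(A/2) * y ^ 2)) := by
      funext y; simp [neg_sq]
    rw [h2, MeasureTheory.integral_neg] at h1
    linarith
  rw [hodd, MeasureTheory.integral_const_mul, integral_gaussian]
  have : Real.pi / (A/2) = 2 * Real.pi / A := by
    field_simp
  rw [this, zero_add]

lemma gauss_abs_integrable (c k : ℝ) (hk : 0 < k) :
    Integrable (fun τ : ℝ => Real.exp (-k * (τ - c) ^ 2) * |τ|) := by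
  have h1 : Integrable (fun y : ℝ => |y| * Real.exp (-k * y ^ 2)) := by
    have h := (integrable_mul_exp_neg_mul_sq hk).abs
    apply h.congr
    filter_upwards with y
    rw [abs_mul, abs_of_pos (Real.exp_pos _)]
  have h2 : Integrable (fun y : ℝ => (|y| + |c|) * Real.exp (-k * y ^ 2)) := by
    have := h1.add ((integrable_exp_neg_mul_sq hk).const_mul |c|)
    apply this.congr
    filter_upwards with y
    simp only [Pi.add_apply]
    ring
  have h3 := h2.comp_sub_right c
  apply h3.mono'
  · exact ((Real.continuous_exp.comp (by fun_prop)).mul continuous_abs).aestronglyMeasurable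
  · filter_upwards with τ
    have h4 : |τ| ≤ |τ - c| + |c| := by
      have := abs_add_le (τ - c) c
      simpa using this
    have h5 : ‖Real.exp (-k * (τ - c) ^ 2) * |τ|‖ = Real.exp (-k * (τ - c) ^ 2) * |τ| := by
      rw [Real.norm_eq_abs, abs_of_nonneg (by positivity)]
    rw [h5]
    calc Real.exp (-k * (τ - c) ^ 2) * |τ| ≤ Real.exp (-k * (τ - c) ^ 2) * (|τ - c| + |c|) := by
          gcongr
      _ = (|τ - c| + |c|) * Real.exp (-k * (τ - c) ^ 2) := by ring

set_option maxHeartbeats 2000000 in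
theorem stmt_0 (σ σ0 τ0 z : ℝ) (hσ : 0 < σ) (hσ0 : 0 < σ0) (hτ0 : 0 < τ0)
    (hz : 0 ≤ z) (N : ℕ) (hN : 0 < N)
    (R : ℝ → ℝ)
    (hR : R = fun β => ∫ τ : ℝ,
      (1 / (Real.sqrt (2 * Real.pi) * σ0)) * Real.exp (-(τ - τ0) ^ 2 / (2 * σ0 ^ 2)) *
        Phi ((N * τ + τ0 * β) / (2 * Real.sqrt N * σ) - z) * τ) :
    ∀ β : ℝ, HasDerivAt R
      (Real.exp (-(N * τ0 + β * τ0 - 2 * Real.sqrt N * z * σ) ^ 2 /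
          (2 * N * (N * σ0 ^ 2 + 4 * σ ^ 2))) * τ0 *
        (-β * τ0 * σ0 ^ 2 + 2 * σ * (Real.sqrt N * z * σ0 ^ 2 + 2 * τ0 * σ)) /
        (Real.sqrt N * Real.sqrt (2 * Real.pi) * σ0 * Real.sqrt (4 / σ0 ^ 2 + N / σ ^ 2) * σ *
          (N * σ0 ^ 2 + 4 * σ ^ 2))) β := by
  intro β
  subst hR
  have hNR : (0:ℝ) < N := by exact_mod_cast hN
  set s : ℝ := Real.sqrt N with hs_def
  have hs0 : 0 < s := Real.sqrt_pos.2 hNR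
  have hs2 : (N:ℝ) = s ^ 2 := by rw [hs_def]; exact (Real.sq_sqrt hNR.le).symm
  rw [hs2]
  have hv0 : 0 < Real.sqrt (2 * Real.pi) := Real.sqrt_pos.2 (by positivity)
  -- The parametrized integrand and its derivative in the parameter
  set F : ℝ → ℝ → ℝ := fun x τ =>
    (1 / (Real.sqrt (2 * Real.pi) * σ0)) * Real.exp (-(τ - τ0) ^ 2 / (2 * σ0 ^ 2)) *
      Phi ((s ^ 2 * τ + τ0 * x) / (2 * s * σ) - z) * τ with hF_def
  set F' : ℝ → ℝ → ℝ := fun x τ =>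
    (1 / (Real.sqrt (2 * Real.pi) * σ0)) * Real.exp (-(τ - τ0) ^ 2 / (2 * σ0 ^ 2)) *
      ((Real.sqrt (2 * Real.pi))⁻¹ *
        Real.exp (-((s ^ 2 * τ + τ0 * x) / (2 * s * σ) - z) ^ 2 / 2) * (τ0 / (2 * s * σ))) * τ
    with hF'_def
  have hFcont : ∀ x, Continuous (fun τ => F x τ) := by
    intro x
    exact ((continuous_const.mul (Real.continuous_exp.comp (by fun_prop))).mul
      (Phi_continuous.comp (by fun_prop))).mul continuous_id
  have hF'cont : ∀ x, Continuous (fun τ => F' x τ) := by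
    intro x
    exact ((continuous_const.mul (Real.continuous_exp.comp (by fun_prop))).mul
      ((continuous_const.mul (Real.continuous_exp.comp (by fun_prop))).mul
        continuous_const)).mul continuous_id
  have hdiff : ∀ (τ x : ℝ), HasDerivAt (fun y => F y τ) (F' x τ) x := by
    intro τ x
    have hinner : HasDerivAt (fun y : ℝ => (s ^ 2 * τ + τ0 * y) / (2 * s * σ) - z)
        (τ0 / (2 * s * σ)) x := by
      rw [show τ0 / (2 * s * σ) = τ0 * 1 / (2 * s * σ) by ring]
      exact ((((hasDerivAt_id x).const_mul τ0).const_add (s ^ 2 * τ)).div_const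
        (2 * s * σ)).sub_const z
    have hcomp := (Phi_hasDerivAt ((s ^ 2 * τ + τ0 * x) / (2 * s * σ) - z)).comp x hinner
    exact (hcomp.const_mul ((1 / (Real.sqrt (2 * Real.pi) * σ0)) *
      Real.exp (-(τ - τ0) ^ 2 / (2 * σ0 ^ 2)))).mul_const τ
  -- integrability of the dominating functions
  have hgauss : ∀ (C : ℝ), Integrable (fun τ : ℝ =>
      C * (Real.exp (-(τ - τ0) ^ 2 / (2 * σ0 ^ 2)) * |τ|)) := by
    intro C
    have h := (gauss_abs_integrable τ0 (1 / (2 * σ0 ^ 2)) (by positivity)).const_mul C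
    apply h.congr
    filter_upwards with τ
    rw [show -(1 / (2 * σ0 ^ 2)) * (τ - τ0) ^ 2 = -(τ - τ0) ^ 2 / (2 * σ0 ^ 2) by ring]
  have hF_int : ∀ x, Integrable (F x) := by
    intro x
    apply (hgauss (1 / (Real.sqrt (2 * Real.pi) * σ0))).mono'
      (hFcont x).aestronglyMeasurable
    filter_upwards with τ
    rw [hF_def]
    simp only [Real.norm_eq_abs]
    rw [abs_mul, abs_mul, abs_mul]
    rw [abs_of_nonneg (by positivity : (0:ℝ) ≤ 1 / (Real.sqrt (2 * Real.pi) * σ0)),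
      abs_of_nonneg (Real.exp_pos _).le]
    have hPhi : |Phi ((s ^ 2 * τ + τ0 * x) / (2 * s * σ) - z)| ≤ 1 :=
      abs_le.2 ⟨by linarith [Phi_nonneg ((s ^ 2 * τ + τ0 * x) / (2 * s * σ) - z)],
        Phi_le_one _⟩
    calc 1 / (Real.sqrt (2 * Real.pi) * σ0) * Real.exp (-(τ - τ0) ^ 2 / (2 * σ0 ^ 2)) *
        |Phi ((s ^ 2 * τ + τ0 * x) / (2 * s * σ) - z)| * |τ|
        ≤ 1 / (Real.sqrt (2 * Real.pi) * σ0) * Real.exp (-(τ - τ0) ^ 2 / (2 * σ0 ^ 2)) *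
          1 * |τ| := by gcongr
      _ = 1 / (Real.sqrt (2 * Real.pi) * σ0) *
          (Real.exp (-(τ - τ0) ^ 2 / (2 * σ0 ^ 2)) * |τ|) := by ring
  have hbound_int : Integrable (fun τ : ℝ =>
      1 / (Real.sqrt (2 * Real.pi) * σ0) * ((Real.sqrt (2 * Real.pi))⁻¹ * (τ0 / (2 * s * σ))) *
        (Real.exp (-(τ - τ0) ^ 2 / (2 * σ0 ^ 2)) * |τ|)) :=
    hgauss _
  have h_bound : ∀ (τ x : ℝ), ‖F' x τ‖ ≤
      1 / (Real.sqrt (2 * Real.pi) * σ0) * ((Real.sqrt (2 * Real.pi))⁻¹ * (τ0 / (2 * s * σ))) *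
        (Real.exp (-(τ - τ0) ^ 2 / (2 * σ0 ^ 2)) * |τ|) := by
    intro τ x
    rw [hF'_def]
    simp only [Real.norm_eq_abs]
    rw [abs_mul, abs_mul]
    rw [abs_of_nonneg (by positivity : (0:ℝ) ≤
        1 / (Real.sqrt (2 * Real.pi) * σ0) * Real.exp (-(τ - τ0) ^ 2 / (2 * σ0 ^ 2))),
      abs_of_nonneg (by positivity : (0:ℝ) ≤ (Real.sqrt (2 * Real.pi))⁻¹ *
        Real.exp (-((s ^ 2 * τ + τ0 * x) / (2 * s * σ) - z) ^ 2 / 2) * (τ0 / (2 * s * σ)))]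
    have hexp1 : Real.exp (-((s ^ 2 * τ + τ0 * x) / (2 * s * σ) - z) ^ 2 / 2) ≤ 1 :=
      Real.exp_le_one_iff.2 (by nlinarith [sq_nonneg ((s ^ 2 * τ + τ0 * x) / (2 * s * σ) - z)])
    calc 1 / (Real.sqrt (2 * Real.pi) * σ0) * Real.exp (-(τ - τ0) ^ 2 / (2 * σ0 ^ 2)) *
        ((Real.sqrt (2 * Real.pi))⁻¹ *
          Real.exp (-((s ^ 2 * τ + τ0 * x) / (2 * s * σ) - z) ^ 2 / 2) * (τ0 / (2 * s * σ))) * |τ|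
        ≤ 1 / (Real.sqrt (2 * Real.pi) * σ0) * Real.exp (-(τ - τ0) ^ 2 / (2 * σ0 ^ 2)) *
          ((Real.sqrt (2 * Real.pi))⁻¹ * 1 * (τ0 / (2 * s * σ))) * |τ| := by
          gcongr
      _ = 1 / (Real.sqrt (2 * Real.pi) * σ0) * ((Real.sqrt (2 * Real.pi))⁻¹ * (τ0 / (2 * s * σ))) *
          (Real.exp (-(τ - τ0) ^ 2 / (2 * σ0 ^ 2)) * |τ|) := by ring
  have key := hasDerivAt_integral_of_dominated_loc_of_deriv_le (μ := volume) (x₀ := β)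
    (s := Metric.ball β 1) (Metric.ball_mem_nhds β one_pos)
    (Filter.Eventually.of_forall fun x => (hFcont x).aestronglyMeasurable)
    (hF_int β)
    (hF'cont β).aestronglyMeasurable
    (Filter.Eventually.of_forall fun τ => fun x _ => h_bound τ x)
    hbound_int
    (Filter.Eventually.of_forall fun τ => fun x _ => hdiff τ x)
  have hApos : (0:ℝ) < (1/σ0^2 + s^2/(4*σ^2)) := by positivity
  have hAB : ∀ τ : ℝ, -(τ - τ0)^2/(2*σ0^2) + -((s^2*τ + τ0*β)/(2*s*σ) - z)^2/2
      = ((τ0/σ0^2 - s/(2*σ)*(τ0*β/(2*s*σ) - z))^2/(2*(1/σ0^2 + s^2/(4*σ^2))) - τ0^2/(2*σ0^2) - (τ0*β/(2*s*σ) - z)^2/2) - (1/σ0^2 + s^2/(4*σ^2))/2*(τ - ((τ0/σ0^2 - s/(2*σ)*(τ0*β/(2*s*σ) - z))/(1/σ0^2 + s^2/(4*σ^2))))^2 := by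
    intro τ
    field_simp
    ring
  have hpt : ∀ τ : ℝ, F' β τ =
      (1/(Real.sqrt (2*Real.pi)*σ0) * ((Real.sqrt (2*Real.pi))⁻¹ * (τ0/(2*s*σ))) * Real.exp ((τ0/σ0^2 - s/(2*σ)*(τ0*β/(2*s*σ) - z))^2/(2*(1/σ0^2 + s^2/(4*σ^2))) - τ0^2/(2*σ0^2) - (τ0*β/(2*s*σ) - z)^2/2)) * (τ * Real.exp (-((1/σ0^2 + s^2/(4*σ^2))/2) * (τ - ((τ0/σ0^2 - s/(2*σ)*(τ0*β/(2*s*σ) - z))/(1/σ0^2 + s^2/(4*σ^2))))^2)) := by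
    intro τ
    rw [hF'_def]
    have h1 : Real.exp (-(τ-τ0)^2/(2*σ0^2)) * Real.exp (-((s^2*τ+τ0*β)/(2*s*σ) - z)^2/2)
        = Real.exp ((τ0/σ0^2 - s/(2*σ)*(τ0*β/(2*s*σ) - z))^2/(2*(1/σ0^2 + s^2/(4*σ^2))) - τ0^2/(2*σ0^2) - (τ0*β/(2*s*σ) - z)^2/2) * Real.exp (-((1/σ0^2 + s^2/(4*σ^2))/2)*(τ - ((τ0/σ0^2 - s/(2*σ)*(τ0*β/(2*s*σ) - z))/(1/σ0^2 + s^2/(4*σ^2))))^2) := by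
      rw [← Real.exp_add, ← Real.exp_add]
      congr 1
      have h2 := hAB τ
      linarith
    linear_combination (1/(Real.sqrt (2*Real.pi)*σ0) * (Real.sqrt (2*Real.pi))⁻¹ *
      (τ0/(2*s*σ)) * τ) * h1
  have hval : (∫ τ : ℝ, F' β τ) = (1/(Real.sqrt (2*Real.pi)*σ0) * ((Real.sqrt (2*Real.pi))⁻¹ * (τ0/(2*s*σ))) * Real.exp ((τ0/σ0^2 - s/(2*σ)*(τ0*β/(2*s*σ) - z))^2/(2*(1/σ0^2 + s^2/(4*σ^2))) - τ0^2/(2*σ0^2) - (τ0*β/(2*s*σ) - z)^2/2)) * (((τ0/σ0^2 - s/(2*σ)*(τ0*β/(2*s*σ) - z))/(1/σ0^2 + s^2/(4*σ^2))) * Real.sqrt (2*Real.pi/(1/σ0^2 + s^2/(4*σ^2)))) := by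
    rw [show (fun τ : ℝ => F' β τ) = fun τ : ℝ =>
        (1/(Real.sqrt (2*Real.pi)*σ0) * ((Real.sqrt (2*Real.pi))⁻¹ * (τ0/(2*s*σ))) * Real.exp ((τ0/σ0^2 - s/(2*σ)*(τ0*β/(2*s*σ) - z))^2/(2*(1/σ0^2 + s^2/(4*σ^2))) - τ0^2/(2*σ0^2) - (τ0*β/(2*s*σ) - z)^2/2)) * (τ * Real.exp (-((1/σ0^2 + s^2/(4*σ^2))/2) * (τ - ((τ0/σ0^2 - s/(2*σ)*(τ0*β/(2*s*σ) - z))/(1/σ0^2 + s^2/(4*σ^2))))^2)) from funext hpt]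
    rw [MeasureTheory.integral_const_mul, integral_lin_gauss (1/σ0^2 + s^2/(4*σ^2)) ((τ0/σ0^2 - s/(2*σ)*(τ0*β/(2*s*σ) - z))/(1/σ0^2 + s^2/(4*σ^2))) hApos]
  have hsqrt4 : Real.sqrt (4/σ0^2 + s^2/σ^2) = 2 * Real.sqrt (1/σ0^2 + s^2/(4*σ^2)) := by
    rw [show 4/σ0^2 + s^2/σ^2 = 2^2*(1/σ0^2 + s^2/(4*σ^2)) by field_simp; ring]
    rw [Real.sqrt_mul (by norm_num : (0:ℝ) ≤ 2^2), Real.sqrt_sq (by norm_num : (0:ℝ) ≤ 2)]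
  have hsqrt2piA : Real.sqrt (2*Real.pi/(1/σ0^2 + s^2/(4*σ^2))) = Real.sqrt (2*Real.pi) / Real.sqrt (1/σ0^2 + s^2/(4*σ^2)) := by
    rw [div_eq_mul_inv, Real.sqrt_mul (by positivity : (0:ℝ) ≤ 2*Real.pi), Real.sqrt_inv,
      ← div_eq_mul_inv]
  have hDE : (((τ0/σ0^2 - s/(2*σ)*(τ0*β/(2*s*σ) - z))^2/(2*(1/σ0^2 + s^2/(4*σ^2))) - τ0^2/(2*σ0^2) - (τ0*β/(2*s*σ) - z)^2/2) : ℝ) = -(s^2*τ0 + β*τ0 - 2*s*z*σ)^2 / (2*s^2*(s^2*σ0^2 + 4*σ^2)) := by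
    field_simp
    ring
  have hu : Real.sqrt (1/σ0^2 + s^2/(4*σ^2)) ≠ 0 := by positivity
  have hfinal : (1/(Real.sqrt (2*Real.pi)*σ0) * ((Real.sqrt (2*Real.pi))⁻¹ * (τ0/(2*s*σ))) * Real.exp ((τ0/σ0^2 - s/(2*σ)*(τ0*β/(2*s*σ) - z))^2/(2*(1/σ0^2 + s^2/(4*σ^2))) - τ0^2/(2*σ0^2) - (τ0*β/(2*s*σ) - z)^2/2)) * (((τ0/σ0^2 - s/(2*σ)*(τ0*β/(2*s*σ) - z))/(1/σ0^2 + s^2/(4*σ^2))) * Real.sqrt (2*Real.pi/(1/σ0^2 + s^2/(4*σ^2)))) = Real.exp (-(s^2*τ0 + β*τ0 - 2*s*z*σ)^2 / (2*s^2*(s^2*σ0^2 + 4*σ^2))) * τ0 * (-β*τ0*σ0^2 + 2*σ*(s*z*σ0^2 + 2*τ0*σ)) / (s * Real.sqrt (2*Real.pi) * σ0 * Real.sqrt (4/σ0^2 + s^2/σ^2) * σ * (s^2*σ0^2 + 4*σ^2)) := by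
    rw [hsqrt2piA, hsqrt4, hDE]
    have hv : Real.sqrt (2*Real.pi) ≠ 0 := ne_of_gt hv0
    field_simp
    ring
  have h2 := key.2
  rw [hval, hfinal] at h2
  simp only [hF_def] at h2
  exact h2
end

section
/- Let σ, σ0, τ0 > 0, z ≥ 0, and N a positive integer. Define R(β) = ∫_{-∞}^{∞} (1/(√(2π) σ0)) exp(−(τ − τ0)²/(2σ0²)) · Φ((Nτ + τ0 β)/(2√N σ) − z) · τ dτ for β ≥ 0. Then R attains its maximum over [0,∞) at β* = 4σ²/σ0² + 2√N z σ/τ0, and in particular R(β*) ≥ R(0), with strict inequality when z > 0 or τ0 ≠ 0. -/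
open Real MeasureTheory

noncomputable def phiFun (t : ℝ) : ℝ := (Real.sqrt (2 * Real.pi))⁻¹ * Real.exp (-t ^ 2 / 2)

noncomputable def eFun (τ0 σ0 τ : ℝ) : ℝ := Real.exp (-(τ - τ0) ^ 2 / (2 * σ0 ^ 2))

lemma phiFun_integrable : Integrable phiFun := by
  have h := (integrable_exp_neg_mul_sq (by norm_num : (0:ℝ) < 1/2)).const_mul
    (Real.sqrt (2 * Real.pi))⁻¹
  convert h using 2 with t
  unfold phiFun
  congr 1
  ring_nf

lemma phiFun_nonneg (t : ℝ) : 0 ≤ phiFun t := by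
  unfold phiFun; positivity

lemma phiFun_le (t : ℝ) : phiFun t ≤ (Real.sqrt (2 * Real.pi))⁻¹ := by
  unfold phiFun
  have h1 : Real.exp (-t ^ 2 / 2) ≤ 1 := by
    rw [Real.exp_le_one_iff]
    nlinarith [sq_nonneg t]
  have h2 : (0:ℝ) ≤ (Real.sqrt (2 * Real.pi))⁻¹ := by positivity
  nlinarith

lemma Phi_eq (x : ℝ) : Phi x = ∫ t in Set.Iic x, phiFun t := rfl

lemma Phi_le (x : ℝ) : Phi x ≤ ∫ t : ℝ, phiFun t := by
  rw [Phi_eq]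
  exact setIntegral_le_integral phiFun_integrable (Filter.Eventually.of_forall phiFun_nonneg)

lemma Phi_mono : Monotone Phi := by
  intro x y hxy
  rw [Phi_eq, Phi_eq]
  exact setIntegral_mono_set phiFun_integrable.integrableOn
    (Filter.Eventually.of_forall phiFun_nonneg)
    (HasSubset.Subset.eventuallyLE (Set.Iic_subset_Iic.2 hxy))

lemma Phi_measurable : Measurable Phi := Phi_mono.measurable

lemma Phi_diff {x1 x2 : ℝ} (h : x1 ≤ x2) :
    Phi x2 - Phi x1 = ∫ t in Set.Ioc x1 x2, phiFun t := by
  rw [Phi_eq, Phi_eq,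
    intervalIntegral.integral_Iic_sub_Iic phiFun_integrable.integrableOn
      phiFun_integrable.integrableOn,
    intervalIntegral.integral_of_le h]

lemma Phi_diff_shift {γ1 γ2 : ℝ} (h : γ1 ≤ γ2) (d : ℝ) :
    Phi (d + γ2) - Phi (d + γ1) = ∫ u in Set.Ioc γ1 γ2, phiFun (d + u) := by
  rw [Phi_diff (by linarith : d + γ1 ≤ d + γ2),
    ← intervalIntegral.integral_of_le (show d + γ1 ≤ d + γ2 by linarith),
    ← intervalIntegral.integral_of_le h]
  have h2 : ∀ u : ℝ, phiFun (d + u) = phiFun (u + d) := fun u => by rw [add_comm]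
  simp only [h2]
  rw [intervalIntegral.integral_comp_add_right phiFun d]
  congr 1 <;> ring

lemma aux_odd_int (b : ℝ) : ∫ x : ℝ, x * Real.exp (-b * x ^ 2) = 0 := by
  have h := integral_neg_eq_self (fun x : ℝ => x * Real.exp (-b * x ^ 2)) volume
  simp only [neg_sq] at h
  have h2 : ∫ x : ℝ, -x * Real.exp (-b * x ^ 2) = -∫ x : ℝ, x * Real.exp (-b * x ^ 2) := by
    rw [← integral_neg]; congr 1; funext x; ring
  rw [h2] at h
  linarith

lemma aux_gauss_int (b : ℝ) (hb : 0 < b) (m C : ℝ) :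
    Integrable (fun x : ℝ => C * Real.exp (-b * (x - m) ^ 2)) := by
  have h1 : Integrable (fun x : ℝ => Real.exp (-b * x ^ 2)) := integrable_exp_neg_mul_sq hb
  exact (h1.comp_sub_right m).const_mul C

lemma aux_gauss_val (b : ℝ) (hb : 0 < b) (m C : ℝ) :
    ∫ x : ℝ, C * Real.exp (-b * (x - m) ^ 2) = C * Real.sqrt (π / b) := by
  rw [MeasureTheory.integral_const_mul,
    integral_sub_right_eq_self (fun x : ℝ => Real.exp (-b * x ^ 2)) m, integral_gaussian]

lemma aux_gauss_moment_int (b m C : ℝ) (hb : 0 < b) :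
    Integrable (fun x : ℝ => (x - m) * (C * Real.exp (-b * (x - m) ^ 2))) := by
  have h1 : Integrable (fun y : ℝ => C * (y * Real.exp (-b * y ^ 2))) :=
    (integrable_mul_exp_neg_mul_sq hb).const_mul C
  have h2 := h1.comp_sub_right m
  convert h2 using 1
  funext x; ring

lemma aux_gauss_moment (b m C : ℝ) (hb : 0 < b) :
    ∫ x : ℝ, (x - m) * (C * Real.exp (-b * (x - m) ^ 2)) = 0 := by
  have h : (fun x : ℝ => (x - m) * (C * Real.exp (-b * (x - m) ^ 2)))
      = fun x => (fun y : ℝ => C * (y * Real.exp (-b * y ^ 2))) (x - m) := by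
    funext x; ring
  rw [h, integral_sub_right_eq_self (fun y : ℝ => C * (y * Real.exp (-b * y ^ 2))) m,
    MeasureTheory.integral_const_mul, aux_odd_int b, mul_zero]
lemma complete_square (σ0 τ0 a u τ : ℝ) (hσ0 : 0 < σ0) :
    eFun τ0 σ0 τ * phiFun (a * τ + u)
      = ((Real.sqrt (2 * Real.pi))⁻¹ *
          Real.exp (-(τ0 ^ 2 / σ0 ^ 2 + u ^ 2
            - (1 / σ0 ^ 2 + a ^ 2) * ((τ0 / σ0 ^ 2 - a * u) / (1 / σ0 ^ 2 + a ^ 2)) ^ 2) / 2)) *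
        Real.exp (-((1 / σ0 ^ 2 + a ^ 2) / 2)
          * (τ - (τ0 / σ0 ^ 2 - a * u) / (1 / σ0 ^ 2 + a ^ 2)) ^ 2) := by
  have hA : (0:ℝ) < 1 / σ0 ^ 2 + a ^ 2 := by positivity
  unfold eFun phiFun
  rw [mul_left_comm, ← Real.exp_add, mul_assoc, ← Real.exp_add]
  congr 2
  field_simp
  ring

lemma inner_int (σ0 τ0 a u : ℝ) (hσ0 : 0 < σ0) :
    Integrable (fun τ : ℝ => eFun τ0 σ0 τ * phiFun (a * τ + u)) := by
  have hA : (0:ℝ) < (1 / σ0 ^ 2 + a ^ 2) / 2 := by positivity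
  simp only [fun τ : ℝ => complete_square σ0 τ0 a u τ hσ0]
  exact aux_gauss_int _ hA _ _

lemma inner_val (σ0 τ0 a u : ℝ) (hσ0 : 0 < σ0) :
    ∫ τ : ℝ, eFun τ0 σ0 τ * phiFun (a * τ + u)
      = ((Real.sqrt (2 * Real.pi))⁻¹ *
          Real.exp (-(τ0 ^ 2 / σ0 ^ 2 + u ^ 2
            - (1 / σ0 ^ 2 + a ^ 2) * ((τ0 / σ0 ^ 2 - a * u) / (1 / σ0 ^ 2 + a ^ 2)) ^ 2) / 2)) *
        Real.sqrt (π / ((1 / σ0 ^ 2 + a ^ 2) / 2)) := by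
  have hA : (0:ℝ) < (1 / σ0 ^ 2 + a ^ 2) / 2 := by positivity
  simp only [fun τ : ℝ => complete_square σ0 τ0 a u τ hσ0]
  exact aux_gauss_val _ hA _ _

lemma inner_pos (σ0 τ0 a u : ℝ) (hσ0 : 0 < σ0) :
    0 < ∫ τ : ℝ, eFun τ0 σ0 τ * phiFun (a * τ + u) := by
  rw [inner_val σ0 τ0 a u hσ0]
  have hA : (0:ℝ) < (1 / σ0 ^ 2 + a ^ 2) / 2 := by positivity
  have h2π : (0:ℝ) < Real.sqrt (2 * Real.pi) := Real.sqrt_pos.2 (by positivity)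
  positivity

lemma aux_odd_int' (b : ℝ) : ∫ x : ℝ, x * Real.exp (-b * x ^ 2) = 0 := by
  have h := integral_neg_eq_self (fun x : ℝ => x * Real.exp (-b * x ^ 2)) volume
  simp only [neg_sq] at h
  have h2 : ∫ x : ℝ, -x * Real.exp (-b * x ^ 2) = -∫ x : ℝ, x * Real.exp (-b * x ^ 2) := by
    rw [← integral_neg]; congr 1; funext x; ring
  rw [h2] at h
  linarith

lemma aux_gauss_moment_int' (b m C : ℝ) (hb : 0 < b) :
    Integrable (fun x : ℝ => (x - m) * (C * Real.exp (-b * (x - m) ^ 2))) := by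
  have h1 : Integrable (fun y : ℝ => C * (y * Real.exp (-b * y ^ 2))) :=
    (integrable_mul_exp_neg_mul_sq hb).const_mul C
  have h2 := h1.comp_sub_right m
  convert h2 using 1
  funext x; ring

lemma aux_gauss_moment' (b m C : ℝ) :
    ∫ x : ℝ, (x - m) * (C * Real.exp (-b * (x - m) ^ 2)) = 0 := by
  have h : (fun x : ℝ => (x - m) * (C * Real.exp (-b * (x - m) ^ 2)))
      = fun x => (fun y : ℝ => C * (y * Real.exp (-b * y ^ 2))) (x - m) := by
    funext x; ring
  rw [h, integral_sub_right_eq_self (fun y : ℝ => C * (y * Real.exp (-b * y ^ 2))) m,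
    MeasureTheory.integral_const_mul, aux_odd_int' b, mul_zero]

lemma inner_moment (σ0 τ0 a u : ℝ) (hσ0 : 0 < σ0) :
    ∫ τ : ℝ, eFun τ0 σ0 τ * phiFun (a * τ + u) * τ
      = ((τ0 / σ0 ^ 2 - a * u) / (1 / σ0 ^ 2 + a ^ 2))
        * ∫ τ : ℝ, eFun τ0 σ0 τ * phiFun (a * τ + u) := by
  have hA : (0:ℝ) < (1 / σ0 ^ 2 + a ^ 2) / 2 := by positivity
  set m : ℝ := (τ0 / σ0 ^ 2 - a * u) / (1 / σ0 ^ 2 + a ^ 2) with hm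
  set C : ℝ := (Real.sqrt (2 * Real.pi))⁻¹ *
      Real.exp (-(τ0 ^ 2 / σ0 ^ 2 + u ^ 2
        - (1 / σ0 ^ 2 + a ^ 2) * ((τ0 / σ0 ^ 2 - a * u) / (1 / σ0 ^ 2 + a ^ 2)) ^ 2) / 2) with hC
  have hsq : ∀ τ : ℝ, eFun τ0 σ0 τ * phiFun (a * τ + u)
      = C * Real.exp (-((1 / σ0 ^ 2 + a ^ 2) / 2) * (τ - m) ^ 2) := by
    intro τ
    rw [complete_square σ0 τ0 a u τ hσ0]
  have hrw : (fun τ : ℝ => eFun τ0 σ0 τ * phiFun (a * τ + u) * τ)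
      = fun τ : ℝ => (τ - m) * (C * Real.exp (-((1 / σ0 ^ 2 + a ^ 2) / 2) * (τ - m) ^ 2))
        + m * (C * Real.exp (-((1 / σ0 ^ 2 + a ^ 2) / 2) * (τ - m) ^ 2)) := by
    funext τ
    rw [hsq τ]
    ring
  rw [hrw, integral_add (aux_gauss_moment_int' _ m C hA)
      ((aux_gauss_int _ hA m C).const_mul m),
    aux_gauss_moment' _ m C, MeasureTheory.integral_const_mul, zero_add]
  congr 1
  simp only [hsq]

lemma eFun_cont (τ0 σ0 : ℝ) : Continuous (eFun τ0 σ0) := by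
  unfold eFun; fun_prop

lemma eFun_nonneg (τ0 σ0 τ : ℝ) : 0 ≤ eFun τ0 σ0 τ := Real.exp_nonneg _

lemma eFun_int (τ0 σ0 : ℝ) (hσ0 : 0 < σ0) : Integrable (eFun τ0 σ0) := by
  have hb : (0:ℝ) < (2 * σ0 ^ 2)⁻¹ := by positivity
  have h1 := (integrable_exp_neg_mul_sq hb).comp_sub_right τ0
  convert h1 using 2 with τ
  unfold eFun
  congr 1
  field_simp

lemma eFun_abs_int (τ0 σ0 : ℝ) (hσ0 : 0 < σ0) :
    Integrable (fun τ : ℝ => eFun τ0 σ0 τ * |τ|) := by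
  have hb : (0:ℝ) < (2 * σ0 ^ 2)⁻¹ := by positivity
  have h1 : Integrable (fun τ : ℝ => (τ - τ0) * eFun τ0 σ0 τ) := by
    have h2 := (integrable_mul_exp_neg_mul_sq hb).comp_sub_right τ0
    convert h2 using 2 with τ
    unfold eFun
    congr 2
    field_simp
  have h3 := h1.norm
  have h4 : Integrable (fun τ : ℝ => ‖(τ - τ0) * eFun τ0 σ0 τ‖ + |τ0| * eFun τ0 σ0 τ) :=
    h3.add ((eFun_int τ0 σ0 hσ0).const_mul _)
  refine h4.mono' ?_ (Filter.Eventually.of_forall fun τ => ?_)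
  · exact ((eFun_cont τ0 σ0).mul continuous_abs).aestronglyMeasurable
  · have he := eFun_nonneg τ0 σ0 τ
    have h5 : |τ| ≤ |τ - τ0| + |τ0| := by
      calc |τ| = |(τ - τ0) + τ0| := by ring_nf
      _ ≤ |τ - τ0| + |τ0| := abs_add_le _ _
    rw [Real.norm_eq_abs, abs_of_nonneg (by positivity)]
    rw [Real.norm_eq_abs, abs_mul, abs_of_nonneg he]
    nlinarith [abs_nonneg (τ - τ0), abs_nonneg τ0, abs_nonneg τ]

@[fun_prop]
lemma phiFun_cont : Continuous phiFun := by unfold phiFun; fun_prop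

@[fun_prop]
lemma eFun_cont' (τ0 σ0 : ℝ) : Continuous (eFun τ0 σ0) := eFun_cont τ0 σ0

lemma Phi_abs_le (x : ℝ) : |Phi x| ≤ ∫ t : ℝ, phiFun t := by
  rw [abs_of_nonneg (Phi_nonneg x)]; exact Phi_le x

lemma R_int (σ0 τ0 a γ c0 : ℝ) (hσ0 : 0 < σ0) :
    Integrable (fun τ : ℝ => c0 * eFun τ0 σ0 τ * Phi (a * τ + γ) * τ) := by
  set K : ℝ := ∫ t : ℝ, phiFun t with hK
  have hK0 : 0 ≤ K := integral_nonneg phiFun_nonneg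
  have hmeas : AEStronglyMeasurable (fun τ : ℝ => c0 * eFun τ0 σ0 τ * Phi (a * τ + γ) * τ)
      volume := by
    apply Measurable.aestronglyMeasurable
    exact ((measurable_const.mul (eFun_cont τ0 σ0).measurable).mul
      (Phi_measurable.comp (by fun_prop))).mul measurable_id
  refine ((eFun_abs_int τ0 σ0 hσ0).const_mul (|c0| * K)).mono' hmeas
    (Filter.Eventually.of_forall fun τ => ?_)
  have he := eFun_nonneg τ0 σ0 τ
  have hP := Phi_abs_le (a * τ + γ)
  rw [← hK] at hP
  have hPa := abs_nonneg (Phi (a * τ + γ))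
  rw [Real.norm_eq_abs]
  calc |c0 * eFun τ0 σ0 τ * Phi (a * τ + γ) * τ|
      = |c0| * eFun τ0 σ0 τ * |Phi (a * τ + γ)| * |τ| := by
        rw [abs_mul, abs_mul, abs_mul, abs_of_nonneg he]
    _ ≤ |c0| * eFun τ0 σ0 τ * K * |τ| := by
        have : (0:ℝ) ≤ |c0| * eFun τ0 σ0 τ := by positivity
        nlinarith [mul_nonneg (mul_nonneg this (sub_nonneg.2 hP)) (abs_nonneg τ)]
    _ = |c0| * K * (eFun τ0 σ0 τ * |τ|) := by ring

lemma master (σ0 τ0 a γ1 γ2 c0 : ℝ) (hσ0 : 0 < σ0) (h12 : γ1 ≤ γ2) :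
    (∫ τ : ℝ, c0 * eFun τ0 σ0 τ * Phi (a * τ + γ2) * τ)
      - ∫ τ : ℝ, c0 * eFun τ0 σ0 τ * Phi (a * τ + γ1) * τ
    = ∫ u in Set.Ioc γ1 γ2,
        c0 * (((τ0 / σ0 ^ 2 - a * u) / (1 / σ0 ^ 2 + a ^ 2))
          * ∫ τ : ℝ, eFun τ0 σ0 τ * phiFun (a * τ + u)) := by
  rw [← integral_sub (R_int σ0 τ0 a γ2 c0 hσ0) (R_int σ0 τ0 a γ1 c0 hσ0)]
  have step1 : ∀ τ : ℝ,
      c0 * eFun τ0 σ0 τ * Phi (a * τ + γ2) * τ - c0 * eFun τ0 σ0 τ * Phi (a * τ + γ1) * τ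
      = ∫ u in Set.Ioc γ1 γ2, (c0 * eFun τ0 σ0 τ * τ) * phiFun (a * τ + u) := by
    intro τ
    rw [show c0 * eFun τ0 σ0 τ * Phi (a * τ + γ2) * τ
          - c0 * eFun τ0 σ0 τ * Phi (a * τ + γ1) * τ
        = (c0 * eFun τ0 σ0 τ * τ) * (Phi (a * τ + γ2) - Phi (a * τ + γ1)) from by ring,
      Phi_diff_shift h12 (a * τ), ← MeasureTheory.integral_const_mul]
  simp only [step1]
  have hFint : Integrable
      (Function.uncurry fun τ u => (c0 * eFun τ0 σ0 τ * τ) * phiFun (a * τ + u))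
      (volume.prod (volume.restrict (Set.Ioc γ1 γ2))) := by
    have hg : Integrable (fun _ : ℝ => (1:ℝ)) (volume.restrict (Set.Ioc γ1 γ2)) :=
      integrableOn_const measure_Ioc_lt_top.ne
    have hf := (eFun_abs_int τ0 σ0 hσ0).const_mul (|c0| * (Real.sqrt (2 * Real.pi))⁻¹)
    refine (hf.mul_prod hg).mono' ?_ (Filter.Eventually.of_forall fun p => ?_)
    · apply Continuous.aestronglyMeasurable
      apply Continuous.mul (by fun_prop)
      exact phiFun_cont.comp (by fun_prop)
    · have he := eFun_nonneg τ0 σ0 p.1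
      have hp1 := phiFun_nonneg (a * p.1 + p.2)
      have hp2 := phiFun_le (a * p.1 + p.2)
      rw [Function.uncurry, Real.norm_eq_abs]
      calc |(c0 * eFun τ0 σ0 p.1 * p.1) * phiFun (a * p.1 + p.2)|
          = |c0| * eFun τ0 σ0 p.1 * |p.1| * phiFun (a * p.1 + p.2) := by
            rw [abs_mul, abs_mul, abs_mul, abs_of_nonneg he, abs_of_nonneg hp1]
        _ ≤ |c0| * eFun τ0 σ0 p.1 * |p.1| * (Real.sqrt (2 * Real.pi))⁻¹ := by
            have : (0:ℝ) ≤ |c0| * eFun τ0 σ0 p.1 * |p.1| := by positivity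
            nlinarith
        _ = |c0| * (Real.sqrt (2 * Real.pi))⁻¹ * (eFun τ0 σ0 p.1 * |p.1|) * 1 := by ring
  rw [MeasureTheory.integral_integral_swap hFint]
  refine setIntegral_congr_fun measurableSet_Ioc fun u _ => ?_
  rw [show (fun τ : ℝ => (c0 * eFun τ0 σ0 τ * τ) * phiFun (a * τ + u))
      = fun τ : ℝ => c0 * (eFun τ0 σ0 τ * phiFun (a * τ + u) * τ) from by funext τ; ring,
    MeasureTheory.integral_const_mul, inner_moment σ0 τ0 a u hσ0]

theorem stmt_1 (σ σ0 τ0 z : ℝ) (hσ : 0 < σ) (hσ0 : 0 < σ0) (hτ0 : 0 < τ0)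
    (hz : 0 ≤ z) (N : ℕ) (hN : 0 < N)
    (R : ℝ → ℝ)
    (hR : R = fun β => ∫ τ : ℝ,
      (1 / (Real.sqrt (2 * Real.pi) * σ0)) * Real.exp (-(τ - τ0) ^ 2 / (2 * σ0 ^ 2)) *
        Phi ((N * τ + τ0 * β) / (2 * Real.sqrt N * σ) - z) * τ)
    (βstar : ℝ) (hβstar : βstar = 4 * σ ^ 2 / σ0 ^ 2 + 2 * Real.sqrt N * z * σ / τ0) :
    (∀ β : ℝ, 0 ≤ β → R β ≤ R βstar) ∧ R 0 ≤ R βstar ∧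
      ((0 < z ∨ τ0 ≠ 0) → R 0 < R βstar) := by
  have hNpos : (0:ℝ) < (N:ℝ) := by exact_mod_cast hN
  set sN : ℝ := Real.sqrt (N:ℝ) with hsNdef
  have hsN : 0 < sN := Real.sqrt_pos.2 hNpos
  have hsN2 : sN ^ 2 = (N:ℝ) := Real.sq_sqrt hNpos.le
  set a : ℝ := (N:ℝ) / (2 * sN * σ) with hadef
  have ha : 0 < a := by positivity
  set c0 : ℝ := 1 / (Real.sqrt (2 * Real.pi) * σ0) with hc0def
  have hsqrt2pi : 0 < Real.sqrt (2 * Real.pi) := Real.sqrt_pos.2 (by positivity)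
  have hc0 : 0 < c0 := by rw [hc0def]; positivity
  set cc : ℝ → ℝ := fun β => τ0 * β / (2 * sN * σ) - z with hccdef
  have harg : ∀ β τ : ℝ, ((N:ℝ) * τ + τ0 * β) / (2 * sN * σ) - z = a * τ + cc β := by
    intro β τ
    simp only [hccdef, hadef]
    field_simp
    ring
  have hRe : ∀ β : ℝ, R β = ∫ τ : ℝ, c0 * eFun τ0 σ0 τ * Phi (a * τ + cc β) * τ := by
    intro β
    rw [hR]
    simp only [harg]
    rfl
  have hccmono : ∀ x y : ℝ, x ≤ y → cc x ≤ cc y := by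
    intro x y hxy
    simp only [hccdef]
    have h2 : (0:ℝ) < 2 * sN * σ := by positivity
    have h3 : τ0 * x ≤ τ0 * y := by nlinarith
    have h4 : τ0 * x / (2 * sN * σ) ≤ τ0 * y / (2 * sN * σ) := by
      rw [div_eq_mul_inv, div_eq_mul_inv]
      exact mul_le_mul_of_nonneg_right h3 (by positivity)
    linarith
  have hkey : a * cc βstar = τ0 / σ0 ^ 2 := by
    simp only [hccdef, hadef, hβstar]
    rw [← hsN2]
    field_simp
    ring
  have hA : (0:ℝ) < 1 / σ0 ^ 2 + a ^ 2 := by positivity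
  -- claim A : β ≤ βstar → R β ≤ R βstar
  have claimA : ∀ β : ℝ, β ≤ βstar → R β ≤ R βstar := by
    intro β hβ
    have h12 : cc β ≤ cc βstar := hccmono _ _ hβ
    have hM := master σ0 τ0 a (cc β) (cc βstar) c0 hσ0 h12
    rw [← hRe, ← hRe] at hM
    have hnn : 0 ≤ ∫ u in Set.Ioc (cc β) (cc βstar),
        c0 * (((τ0 / σ0 ^ 2 - a * u) / (1 / σ0 ^ 2 + a ^ 2))
          * ∫ τ : ℝ, eFun τ0 σ0 τ * phiFun (a * τ + u)) := by
      apply setIntegral_nonneg measurableSet_Ioc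
      intro u hu
      have h1 : 0 ≤ τ0 / σ0 ^ 2 - a * u := by
        have h5 : a * u ≤ τ0 / σ0 ^ 2 := by
          rw [← hkey]; exact mul_le_mul_of_nonneg_left hu.2 ha.le
        linarith
      have h2 := (inner_pos σ0 τ0 a u hσ0).le
      exact mul_nonneg hc0.le (mul_nonneg (div_nonneg h1 hA.le) h2)
    linarith
  -- claim B : βstar ≤ β → R β ≤ R βstar
  have claimB : ∀ β : ℝ, βstar ≤ β → R β ≤ R βstar := by
    intro β hβ
    have h12 : cc βstar ≤ cc β := hccmono _ _ hβ
    have hM := master σ0 τ0 a (cc βstar) (cc β) c0 hσ0 h12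
    rw [← hRe, ← hRe] at hM
    have hnp : (∫ u in Set.Ioc (cc βstar) (cc β),
        c0 * (((τ0 / σ0 ^ 2 - a * u) / (1 / σ0 ^ 2 + a ^ 2))
          * ∫ τ : ℝ, eFun τ0 σ0 τ * phiFun (a * τ + u))) ≤ 0 := by
      apply setIntegral_nonpos measurableSet_Ioc
      intro u hu
      have h1 : τ0 / σ0 ^ 2 - a * u ≤ 0 := by
        have h5 : τ0 / σ0 ^ 2 ≤ a * u := by
          rw [← hkey]; exact mul_le_mul_of_nonneg_left hu.1.le ha.le
        linarith
      have h2 := (inner_pos σ0 τ0 a u hσ0).le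
      have hqH : ((τ0 / σ0 ^ 2 - a * u) / (1 / σ0 ^ 2 + a ^ 2))
          * (∫ τ : ℝ, eFun τ0 σ0 τ * phiFun (a * τ + u)) ≤ 0 :=
        mul_nonpos_iff.2 (Or.inr ⟨div_nonpos_of_nonpos_of_nonneg h1 hA.le, h2⟩)
      exact mul_nonpos_iff.2 (Or.inl ⟨hc0.le, hqH⟩)
    linarith
  -- strict part
  have hccstar_pos : 0 < cc βstar := by
    have h1 : 0 < a * cc βstar := by rw [hkey]; positivity
    rcases mul_pos_iff.1 h1 with ⟨_, h⟩ | ⟨h, _⟩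
    · exact h
    · linarith
  have hc00 : cc 0 = -z := by simp [hccdef]
  have h120 : cc 0 ≤ cc βstar := by rw [hc00]; linarith
  have hstrict : R 0 < R βstar := by
    have hM := master σ0 τ0 a (cc 0) (cc βstar) c0 hσ0 h120
    rw [← hRe, ← hRe] at hM
    have hpos : 0 < ∫ u in Set.Ioc (cc 0) (cc βstar),
        c0 * (((τ0 / σ0 ^ 2 - a * u) / (1 / σ0 ^ 2 + a ^ 2))
          * ∫ τ : ℝ, eFun τ0 σ0 τ * phiFun (a * τ + u)) := by
      rw [setIntegral_pos_iff_support_of_nonneg_ae]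
      · -- measure of support
        refine lt_of_lt_of_le ?_ (measure_mono (?_ :
            Set.Ioo (cc 0) (cc βstar) ⊆ _))
        · rw [Real.volume_Ioo]
          rw [hc00]
          exact ENNReal.ofReal_pos.2 (by linarith)
        · intro u hu
          refine ⟨?_, hu.1, hu.2.le⟩
          have h1 : 0 < τ0 / σ0 ^ 2 - a * u := by
            have h5 : a * u < τ0 / σ0 ^ 2 := by
              rw [← hkey]; exact mul_lt_mul_of_pos_left hu.2 ha
            linarith
          have h2 := inner_pos σ0 τ0 a u hσ0
          exact ne_of_gt (mul_pos hc0 (mul_pos (div_pos h1 hA) h2))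
      · filter_upwards [ae_restrict_mem measurableSet_Ioc] with u hu
        have h1 : 0 ≤ τ0 / σ0 ^ 2 - a * u := by
          have h5 : a * u ≤ τ0 / σ0 ^ 2 := by
            rw [← hkey]; exact mul_le_mul_of_nonneg_left hu.2 ha.le
          linarith
        have h2 := (inner_pos σ0 τ0 a u hσ0).le
        exact mul_nonneg hc0.le (mul_nonneg (div_nonneg h1 hA.le) h2)
      · -- IntegrableOn
        have hfeq : (fun u : ℝ => c0 * (((τ0 / σ0 ^ 2 - a * u) / (1 / σ0 ^ 2 + a ^ 2))
              * ∫ τ : ℝ, eFun τ0 σ0 τ * phiFun (a * τ + u)))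
            = fun u : ℝ => c0 * (((τ0 / σ0 ^ 2 - a * u) / (1 / σ0 ^ 2 + a ^ 2))
              * (((Real.sqrt (2 * Real.pi))⁻¹ *
                  Real.exp (-(τ0 ^ 2 / σ0 ^ 2 + u ^ 2
                    - (1 / σ0 ^ 2 + a ^ 2)
                      * ((τ0 / σ0 ^ 2 - a * u) / (1 / σ0 ^ 2 + a ^ 2)) ^ 2) / 2)) *
                Real.sqrt (π / ((1 / σ0 ^ 2 + a ^ 2) / 2)))) := by
          funext u
          rw [inner_val σ0 τ0 a u hσ0]
        rw [hfeq]
        apply Continuous.integrableOn_Ioc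
        fun_prop
    linarith
  have hβstar0 : (0:ℝ) ≤ βstar := by
    rw [hβstar]
    have : (0:ℝ) ≤ Real.sqrt (N:ℝ) := Real.sqrt_nonneg _
    positivity
  refine ⟨fun β _ => ?_, claimA 0 hβstar0, fun _ => hstrict⟩
  rcases le_total β βstar with h | h
  · exact claimA β h
  · exact claimB β h
end

section
/- Let (τ_k, τ̂_k)_{k≥1} be i.i.d. pairs where τ_k has finite second moment and, for each K, thresholds c_K are random variables independent across the index construction such that c_K →p c for a constant c. Assume that conditionally on τ_k, the distribution of τ̂_k is continuous (Gaussian). Then K⁻¹ Σ_{k=1}^K |τ_k| · 1{c_K < τ̂_k ≤ c} converges in probability to 0 as K → ∞. -/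
open MeasureTheory ProbabilityTheory Filter

theorem stmt_12 {Ω : Type*} [MeasureSpace Ω] [IsProbabilityMeasure (ℙ : Measure Ω)]
    (W : ℕ → Ω → ℝ × ℝ) (hmeas : ∀ k, Measurable (W k))
    (hindep : iIndepFun W ℙ)
    (μ : Measure (ℝ × ℝ)) (hident : ∀ k, Measure.map (W k) ℙ = μ)
    (hmom : Integrable (fun ω => ((W 0 ω).1) ^ 2) ℙ)
    (hcont : ∀ x : ℝ, μ.map Prod.snd {x} = 0)
    (c : ℝ) (cK : ℕ → Ω → ℝ) (hcKmeas : ∀ K, Measurable (cK K))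
    (hcK : ∀ ε : ℝ, 0 < ε →
      Tendsto (fun K => ℙ {ω | ε ≤ |cK K ω - c|}) atTop (nhds 0)) :
    ∀ ε : ℝ, 0 < ε →
      Tendsto (fun K : ℕ =>
          ℙ {ω | ε ≤ |(K : ℝ)⁻¹ * ∑ k ∈ Finset.range K,
            |(W k ω).1| * (if cK K ω < (W k ω).2 ∧ (W k ω).2 ≤ c then 1 else 0)|})
        atTop (nhds 0) := by
  intro ε hε
  -- f δ is the deterministic-threshold integrand; m δ its mean under μ
  set f : ℝ → ℝ × ℝ → ℝ :=
    fun δ x => |x.1| * (if c - δ < x.2 ∧ x.2 ≤ c then 1 else 0) with hf_def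
  set m : ℝ → ℝ := fun δ => ∫ x, f δ x ∂μ with hm_def
  have hfmeas : ∀ δ, Measurable (f δ) := by
    intro δ
    apply (measurable_fst.abs).mul
    exact Measurable.ite
      ((measurable_snd measurableSet_Ioc : MeasurableSet (Prod.snd ⁻¹' Set.Ioc (c - δ) c)))
      measurable_const measurable_const
  -- |x.1| is integrable under μ
  have hint1 : Integrable (fun x : ℝ × ℝ => |x.1|) μ := by
    have h2 : Integrable (fun x : ℝ × ℝ => x.1 ^ 2) μ := by
      rw [← hident 0,
        integrable_map_measure (measurable_fst.pow_const 2).aestronglyMeasurable (hmeas 0).aemeasurable]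
      exact hmom
    have hμprob : IsProbabilityMeasure μ :=
      (hident 0) ▸ Measure.isProbabilityMeasure_map (hmeas 0).aemeasurable
    have hg : Integrable (fun x : ℝ × ℝ => (x.1 ^ 2 + 1) / 2) μ :=
      (h2.add (integrable_const 1)).div_const 2
    refine Integrable.mono' hg
      (measurable_fst.abs).aestronglyMeasurable (ae_of_all _ fun x => ?_)
    have : ‖|x.1|‖ = |x.1| := by rw [Real.norm_eq_abs, abs_abs]
    rw [this]
    nlinarith [sq_nonneg (|x.1| - 1), sq_abs x.1]
  have hfbound : ∀ δ (x : ℝ × ℝ), ‖f δ x‖ ≤ |x.1| := by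
    intro δ x
    rw [Real.norm_eq_abs]; simp only [hf_def]
    split_ifs with h
    · simp [abs_abs]
    · simp [abs_nonneg]
  have hfint : ∀ δ, Integrable (f δ) μ := fun δ =>
    Integrable.mono' hint1 (hfmeas δ).aestronglyMeasurable (ae_of_all _ (hfbound δ))
  have hfnonneg : ∀ δ (x : ℝ × ℝ), 0 ≤ f δ x := by
    intro δ x; simp only [hf_def]; positivity
  -- m (1/(n+1)) → 0
  have hnull : μ {x : ℝ × ℝ | x.2 = c} = 0 := by
    have := hcont c
    rwa [Measure.map_apply measurable_snd (measurableSet_singleton c)] at this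
  have hm0 : Tendsto (fun n : ℕ => m (1 / ((n : ℝ) + 1))) atTop (nhds 0) := by
    have hG : ∫ x, (|x.1| * (if x.2 = c then 1 else 0) : ℝ) ∂μ = 0 := by
      rw [integral_eq_zero_iff_of_nonneg (fun x => by positivity)]
      · refine measure_mono_null ?_ hnull
        intro x hx
        simp only [Set.mem_setOf_eq, Function.mem_support] at hx ⊢
        by_contra h
        simp [h] at hx
      · exact Integrable.mono' hint1
          ((measurable_fst.abs.mul (Measurable.ite
            (measurable_snd (measurableSet_singleton c)) measurable_const
            measurable_const)).aestronglyMeasurable)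
          (ae_of_all _ fun x => by
            rw [Real.norm_eq_abs]
            split_ifs with h
            · simp [abs_abs]
            · simp [abs_nonneg])
    have := tendsto_integral_of_dominated_convergence (μ := μ)
      (F := fun n : ℕ => f (1 / ((n : ℝ) + 1)))
      (f := fun x => |x.1| * (if x.2 = c then 1 else 0))
      (bound := fun x => |x.1|)
      (fun n => (hfmeas _).aestronglyMeasurable)
      hint1
      (fun n => ae_of_all _ (hfbound _))
      (ae_of_all _ fun x => ?_)
    · rw [hG] at this; exact this
    · rcases lt_trichotomy x.2 c with h | h | h
      · show Tendsto _ atTop (nhds (|x.1| * if x.2 = c then 1 else 0))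
        rw [if_neg h.ne, mul_zero]
        have h1 : Tendsto (fun n : ℕ => 1 / ((n : ℝ) + 1)) atTop (nhds 0) :=
          tendsto_one_div_add_atTop_nhds_zero_nat
        apply tendsto_const_nhds.congr'
        filter_upwards [h1.eventually_lt_const (show (0:ℝ) < c - x.2 by linarith)] with n hn
        have hcond : ¬(c - 1 / ((n:ℝ) + 1) < x.2 ∧ x.2 ≤ c) := fun hh => by linarith [hh.1]
        simp only [hf_def, if_neg hcond, mul_zero]
      · show Tendsto _ atTop (nhds (|x.1| * if x.2 = c then 1 else 0))
        rw [if_pos h, mul_one]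
        have heq : ∀ n : ℕ, f (1 / ((n:ℝ) + 1)) x = |x.1| := by
          intro n
          have h0 : (0:ℝ) < 1 / ((n:ℝ) + 1) := by positivity
          have hcond : c - 1 / ((n:ℝ) + 1) < x.2 ∧ x.2 ≤ c := ⟨by rw [h]; linarith, h.le⟩
          simp only [hf_def, if_pos hcond, mul_one]
        simp only [heq]
        exact tendsto_const_nhds
      · show Tendsto _ atTop (nhds (|x.1| * if x.2 = c then 1 else 0))
        rw [if_neg h.ne', mul_zero]
        have heq : ∀ n : ℕ, f (1 / ((n:ℝ) + 1)) x = 0 := by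
          intro n
          have hcond : ¬(c - 1 / ((n:ℝ) + 1) < x.2 ∧ x.2 ≤ c) := fun hh =>
            absurd hh.2 (not_le.mpr h)
          simp only [hf_def, if_neg hcond, mul_zero]
        simp only [heq]
        exact tendsto_const_nhds
  -- key bound
  have hkey : ∀ δ : ℝ, 0 < δ → ∀ K : ℕ, 1 ≤ K →
      ℙ {ω | ε ≤ |(K : ℝ)⁻¹ * ∑ k ∈ Finset.range K,
            |(W k ω).1| * (if cK K ω < (W k ω).2 ∧ (W k ω).2 ≤ c then 1 else 0)|}
        ≤ ℙ {ω | δ ≤ |cK K ω - c|} + ENNReal.ofReal (m δ / ε) := by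
    intro δ hδ K hK
    set T : Ω → ℝ := fun ω => (K : ℝ)⁻¹ * ∑ k ∈ Finset.range K, f δ (W k ω) with hT_def
    have hsub : {ω | ε ≤ |(K : ℝ)⁻¹ * ∑ k ∈ Finset.range K,
            |(W k ω).1| * (if cK K ω < (W k ω).2 ∧ (W k ω).2 ≤ c then 1 else 0)|}
        ⊆ {ω | δ ≤ |cK K ω - c|} ∪ {ω | ε ≤ T ω} := by
      intro ω hω
      simp only [Set.mem_setOf_eq] at hω
      by_cases hc : δ ≤ |cK K ω - c|
      · exact Or.inl hc
      · right
        push_neg at hc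
        have hclow : c - δ < cK K ω := by
          have := abs_lt.mp hc
          linarith [this.1]
        have hterm : ∀ k ∈ Finset.range K,
            |(W k ω).1| * (if cK K ω < (W k ω).2 ∧ (W k ω).2 ≤ c then 1 else 0)
              ≤ f δ (W k ω) := by
          intro k _
          simp only [hf_def]
          apply mul_le_mul_of_nonneg_left _ (abs_nonneg _)
          split_ifs with h1 h2
          · exact le_refl 1
          · exact absurd ⟨lt_trans hclow h1.1, h1.2⟩ h2
          · exact zero_le_one
          · exact le_refl 0
        have hSnn : 0 ≤ (K : ℝ)⁻¹ * ∑ k ∈ Finset.range K,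
            |(W k ω).1| * (if cK K ω < (W k ω).2 ∧ (W k ω).2 ≤ c then 1 else 0) := by
          apply mul_nonneg (by positivity)
          apply Finset.sum_nonneg
          intro k _
          positivity
        have hST : (K : ℝ)⁻¹ * ∑ k ∈ Finset.range K,
            |(W k ω).1| * (if cK K ω < (W k ω).2 ∧ (W k ω).2 ≤ c then 1 else 0) ≤ T ω := by
          simp only [hT_def]
          apply mul_le_mul_of_nonneg_left (Finset.sum_le_sum hterm) (by positivity)
        rw [abs_of_nonneg hSnn] at hω
        exact le_trans hω hST
    refine le_trans (measure_mono hsub) (le_trans (measure_union_le _ _) ?_)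
    gcongr
    -- Markov on T
    have hintk : ∀ k, Integrable (fun ω => f δ (W k ω)) ℙ := by
      intro k
      have := (integrable_map_measure (hfmeas δ).aestronglyMeasurable
        (hmeas k).aemeasurable).mp (by rw [hident k]; exact hfint δ)
      exact this
    have hTint : Integrable T ℙ := by
      simp only [hT_def]
      exact (integrable_finset_sum _ fun k _ => hintk k).const_mul _
    have hTnn : 0 ≤ᵐ[ℙ] T := ae_of_all _ fun ω => by
      simp only [hT_def]
      apply mul_nonneg (by positivity)
      exact Finset.sum_nonneg fun k _ => hfnonneg δ _
    have hTmean : ∫ ω, T ω ∂ℙ = m δ := by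
      simp only [hT_def]
      rw [integral_const_mul, integral_finset_sum _ fun k _ => hintk k]
      have hEk : ∀ k, ∫ ω, f δ (W k ω) ∂ℙ = m δ := by
        intro k
        simp only [hm_def]
        rw [ ← hident k,
          integral_map (hmeas k).aemeasurable (hfmeas δ).aestronglyMeasurable]
      simp only [hEk, Finset.sum_const, Finset.card_range, nsmul_eq_mul]
      have hKne : ((K : ℝ)) ≠ 0 := by
        have : 0 < K := by omega
        positivity
      rw [← mul_assoc, inv_mul_cancel₀ hKne, one_mul]
    have hmarkov := mul_meas_ge_le_integral_of_nonneg hTnn hTint ε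
    rw [hTmean] at hmarkov
    have hfin : ℙ {ω | ε ≤ T ω} ≠ ⊤ := measure_ne_top _ _
    calc ℙ {ω | ε ≤ T ω} = ENNReal.ofReal (ℙ {ω | ε ≤ T ω}).toReal :=
          (ENNReal.ofReal_toReal hfin).symm
      _ ≤ ENNReal.ofReal (m δ / ε) := by
          apply ENNReal.ofReal_le_ofReal
          rw [le_div_iff₀ hε, mul_comm]
          exact hmarkov
  -- assemble
  rw [ENNReal.tendsto_atTop_zero]
  intro η hη
  have hη2 : (0 : ENNReal) < η / 2 := ENNReal.half_pos hη.ne'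
  have htend : Tendsto (fun n : ℕ => ENNReal.ofReal (m (1 / ((n : ℝ) + 1)) / ε))
      atTop (nhds 0) := by
    have := ENNReal.tendsto_ofReal (hm0.div_const ε)
    simpa using this
  obtain ⟨n, hn⟩ := (htend.eventually_lt_const hη2).exists
  set δ : ℝ := 1 / ((n : ℝ) + 1) with hδ_def
  have hδpos : 0 < δ := by positivity
  obtain ⟨N, hN⟩ := ENNReal.tendsto_atTop_zero.mp (hcK δ hδpos) (η / 2) hη2
  refine ⟨max N 1, fun K hK => ?_⟩
  have h1 : 1 ≤ K := le_trans (le_max_right N 1) hK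
  have h2 : N ≤ K := le_trans (le_max_left N 1) hK
  calc ℙ _ ≤ ℙ {ω | δ ≤ |cK K ω - c|} + ENNReal.ofReal (m δ / ε) := hkey δ hδpos K h1
    _ ≤ η / 2 + η / 2 := add_le_add (hN K h2) hn.le
    _ = η := ENNReal.add_halves η
end
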